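/- Fix a cell i. Let σ_{i,n,k} > 0 and μ_{n,k} ≥ 0, set t_{n,k} = σ_{i,n,k}·μ_{n,k}, and let m̄ > 0 solve 1/m̄ = (1/N_t)·Σ_{n,k} t_{n,k}/(1+t_{n,k}·m̄) + 1. Define m̄' = m̄² / (1 − (1/N_t)·Σ_{n,k} (t_{n,k}·m̄/(1+t_{n,k}·m̄))²) and G_{n,k} = σ_{i,n,k}/(1+t_{n,k}·m̄)². Then for every j with μ_{i,j} arbitrary nonnegative, the asymptotic uplink SINR expression satisfies the identity: σ_{i,i,j}·μ_{i,j}·m̄² / ( (1/N_t)·Σ_{n,k} μ_{n,k}·G_{n,k}·m̄' + m̄' ) = σ_{i,i,j}·μ_{i,j}·m̄. -/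

import Mathlib

open Finset

/-- The asymptotic uplink SINR expression of the ROBF algorithm
simplifies to `σ_{i,i,j} μ_{i,j} m̄`. -/
theorem asymptotic_uplink_sinr_identity
    (N K Nt : ℕ) (hNt : 0 < Nt)
    (i : Fin N) (j : Fin K)
    (σ : Fin N → Fin K → ℝ) (hσ : ∀ n k, 0 < σ n k)
    (μ : Fin N → Fin K → ℝ) (hμ : ∀ n k, 0 ≤ μ n k)
    (t : Fin N → Fin K → ℝ) (ht : ∀ n k, t n k = σ n k * μ n k)
    (m : ℝ) (hm : 0 < m)
    (hfp : 1 / m = (1 / (Nt : ℝ)) * ∑ n, ∑ k, t n k / (1 + t n k * m) + 1)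
    (m' : ℝ)
    (hm' : m' = m ^ 2 /
      (1 - (1 / (Nt : ℝ)) * ∑ n, ∑ k, (t n k * m / (1 + t n k * m)) ^ 2))
    (G : Fin N → Fin K → ℝ)
    (hG : ∀ n k, G n k = σ n k / (1 + t n k * m) ^ 2) :
    σ i j * μ i j * m ^ 2 /
      ((1 / (Nt : ℝ)) * (∑ n, ∑ k, μ n k * G n k * m') + m')
      = σ i j * μ i j * m := by
  have ht0 : ∀ n k, 0 ≤ t n k := fun n k => by
    rw [ht]; exact mul_nonneg (hσ n k).le (hμ n k)
  have hpos : ∀ n k, 0 < 1 + t n k * m := fun n k => by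
    have := mul_nonneg (ht0 n k) hm.le; linarith
  set A := (1/(Nt:ℝ)) * ∑ n, ∑ k, t n k / (1 + t n k * m) with hA
  set B := (1/(Nt:ℝ)) * ∑ n, ∑ k, t n k / (1 + t n k * m)^2 with hB
  have hB0 : 0 ≤ B := by
    apply mul_nonneg (by positivity)
    refine Finset.sum_nonneg fun n _ => Finset.sum_nonneg fun k _ => ?_
    have h1 := ht0 n k
    have h2 := hpos n k
    positivity
  have hS : (1/(Nt:ℝ)) * ∑ n, ∑ k, (t n k * m / (1 + t n k * m))^2 = m*A - m*B := by
    have hsum : ∑ n, ∑ k, (t n k * m / (1 + t n k * m))^2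
        = ∑ n, ∑ k, (m * (t n k/(1 + t n k * m)) - m * (t n k/(1 + t n k * m)^2)) := by
      refine Finset.sum_congr rfl fun n _ => Finset.sum_congr rfl fun k _ => ?_
      have h := (hpos n k).ne'
      field_simp
      ring
    rw [hsum, hA, hB]
    simp only [Finset.sum_sub_distrib, ← Finset.mul_sum]
    ring
  have hone : 1 = m * A + m := by
    have hm0 := hm.ne'
    field_simp at hfp
    linarith
  have hden : 1 - (1/(Nt:ℝ)) * ∑ n, ∑ k, (t n k * m / (1 + t n k * m))^2
      = m * (B + 1) := by
    rw [hS]; linarith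
  have hm'2 : m' = m / (B + 1) := by
    rw [hm', hden, pow_two, mul_div_mul_left _ _ hm.ne']
  have hμG : ∑ n, ∑ k, μ n k * G n k * m' = (∑ n, ∑ k, t n k / (1 + t n k * m)^2) * m' := by
    rw [Finset.sum_mul]
    refine Finset.sum_congr rfl fun n _ => ?_
    rw [Finset.sum_mul]
    refine Finset.sum_congr rfl fun k _ => ?_
    rw [hG, ht]
    have h := (hpos n k).ne'
    field_simp
  have hBpos : 0 < B + 1 := by linarith
  have hdenm : (1/(Nt:ℝ)) * (∑ n, ∑ k, μ n k * G n k * m') + m' = m := by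
    have hX : (1/(Nt:ℝ)) * ((∑ n, ∑ k, t n k / (1 + t n k * m)^2) * (m/(B+1)))
        = B * (m/(B+1)) := by rw [hB]; ring
    rw [hμG, hm'2, hX]
    field_simp
  rw [hdenm, pow_two, ← mul_assoc, mul_div_assoc, div_self hm.ne', mul_one]
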